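/- A free semigroup on at least two generators is not finitely subdirectly irreducible: if x and y are distinct free generators of a free semigroup G, then the semigroup congruence generated by the pair (x, x²) and the semigroup congruence generated by the pair (y, y²) intersect in the trivial (diagonal) congruence. -/

import Mathlib

open scoped Classical in
/-- Collapse adjacent repetitions of `x` in a list. -/
noncomputable def col {α : Type*} (x : α) : List α → List α
  | [] => []
  | [a] => [a]
  | a :: b :: l => if a = x ∧ b = x then col x (b :: l) else a :: col x (b :: l)

theorem col_head? {α : Type*} (x : α) : ∀ l : List α, (col x l).head? = l.head?
  | [] => by simp [col]
  | [a] => by simp [col]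
  | a :: b :: l => by
    rw [col]
    split
    · rename_i h
      rw [col_head? x (b :: l)]
      simp [h.1, h.2]
    · simp

theorem col_cons_pos {α : Type*} {x a : α} {l : List α} (ha : a = x)
    (hl : l.head? = some x) : col x (a :: l) = col x l := by
  cases l with
  | nil => simp at hl
  | cons b l' =>
    rw [col, if_pos ⟨ha, by simpa using hl⟩]

theorem col_cons_neg {α : Type*} {x a : α} {l : List α}
    (h : ¬(a = x ∧ l.head? = some x)) : col x (a :: l) = a :: col x l := by
  cases l with
  | nil => simp [col]
  | cons b l' =>
    rw [col, if_neg (by simpa using h)]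

theorem col_append_left {α : Type*} (x : α) :
    ∀ u v : List α, col x (u ++ v) = col x (col x u ++ v)
  | [], v => by simp [col]
  | [a], v => by simp [col]
  | a :: b :: u, v => by
    have hne : col x (b :: u) ≠ [] := by
      intro hnil
      have := col_head? x (b :: u)
      rw [hnil] at this
      simp at this
    obtain ⟨c, rest, hcr⟩ := List.exists_cons_of_ne_nil hne
    have hcb : c = b := by
      have := col_head? x (b :: u)
      rw [hcr] at this
      simpa using this
    rw [hcb] at hcr
    by_cases h : a = x ∧ b = x
    · have e1 : col x ((a :: b :: u) ++ v) = col x ((b :: u) ++ v) :=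
        col_cons_pos h.1 (by simp [h.2])
      have e2 : col x (a :: b :: u) = col x (b :: u) :=
        col_cons_pos h.1 (by simp [h.2])
      rw [e1, e2]
      exact col_append_left x (b :: u) v
    · have e1 : col x ((a :: b :: u) ++ v) = a :: col x ((b :: u) ++ v) :=
        col_cons_neg (by simpa using h)
      have e2 : col x (a :: b :: u) = a :: col x (b :: u) :=
        col_cons_neg (by simpa using h)
      have e3 : col x ((a :: col x (b :: u)) ++ v) = a :: col x (col x (b :: u) ++ v) :=
        col_cons_neg (by rw [hcr]; simpa using h)
      rw [e1, e2, e3, col_append_left x (b :: u) v]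

theorem col_idem {α : Type*} (x : α) (l : List α) : col x (col x l) = col x l := by
  have := col_append_left x l []
  simpa using this.symm

theorem col_append_right {α : Type*} (x : α) :
    ∀ u v : List α, col x (u ++ v) = col x (u ++ col x v)
  | [], v => by simpa using (col_idem x v).symm
  | [a], v => by
    cases v with
    | nil => simp [col]
    | cons b v' =>
      have hne : col x (b :: v') ≠ [] := by
        intro hnil
        have := col_head? x (b :: v')
        rw [hnil] at this
        simp at this
      obtain ⟨c, rest, hcr⟩ := List.exists_cons_of_ne_nil hne
      have hcb : c = b := by
        have := col_head? x (b :: v')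
        rw [hcr] at this
        simpa using this
      rw [hcb] at hcr
      by_cases h : a = x ∧ b = x
      · have e1 : col x ([a] ++ b :: v') = col x (b :: v') :=
          col_cons_pos h.1 (by simp [h.2])
        have e2 : col x ([a] ++ col x (b :: v')) = col x (col x (b :: v')) :=
          col_cons_pos h.1 (by rw [hcr]; simp [h.2])
        rw [e1, e2, col_idem]
      · have e1 : col x ([a] ++ b :: v') = a :: col x (b :: v') :=
          col_cons_neg (by simpa using h)
        have e2 : col x ([a] ++ col x (b :: v')) = a :: col x (col x (b :: v')) :=
          col_cons_neg (by rw [hcr]; simpa using h)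
        rw [e1, e2, col_idem]
  | a :: b :: u, v => by
    by_cases h : a = x ∧ b = x
    · have e1 : col x ((a :: b :: u) ++ v) = col x ((b :: u) ++ v) :=
        col_cons_pos h.1 (by simp [h.2])
      have e2 : col x ((a :: b :: u) ++ col x v) = col x ((b :: u) ++ col x v) :=
        col_cons_pos h.1 (by simp [h.2])
      rw [e1, e2]
      exact col_append_right x (b :: u) v
    · have e1 : col x ((a :: b :: u) ++ v) = a :: col x ((b :: u) ++ v) :=
        col_cons_neg (by simpa using h)
      have e2 : col x ((a :: b :: u) ++ col x v) = a :: col x ((b :: u) ++ col x v) :=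
        col_cons_neg (by simpa using h)
      rw [e1, e2, col_append_right x (b :: u) v]

theorem col_inj {α : Type*} {x y : α} (hxy : x ≠ y) :
    ∀ l m : List α, col x l = col x m → col y l = col y m → l = m
  | [], [], _, _ => rfl
  | [], b :: m', hx, _ => by
    have h := congrArg List.head? hx
    rw [col_head?, col_head?] at h
    simp at h
  | a :: l', [], hx, _ => by
    have h := congrArg List.head? hx
    rw [col_head?, col_head?] at h
    simp at h
  | a :: l', b :: m', hx, hy => by
    have hab : a = b := by
      have h := congrArg List.head? hx
      rw [col_head?, col_head?] at h
      simpa using h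
    subst hab
    by_cases hax : a = x
    · have hay : ¬ a = y := fun h => hxy (hax.symm.trans h)
      rw [col_cons_neg (fun hh => hay hh.1), col_cons_neg (fun hh => hay hh.1)] at hy
      have hy' : col y l' = col y m' := by injection hy
      have hhead : l'.head? = m'.head? := by
        rw [← col_head? y l', ← col_head? y m', hy']
      by_cases hl : l'.head? = some x
      · have hm : m'.head? = some x := hhead ▸ hl
        rw [col_cons_pos hax hl, col_cons_pos hax hm] at hx
        exact congrArg (List.cons a) (col_inj hxy l' m' hx hy')
      · have hm : ¬ m'.head? = some x := hhead ▸ hl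
        rw [col_cons_neg (fun hh => hl hh.2), col_cons_neg (fun hh => hm hh.2)] at hx
        have hx' : col x l' = col x m' := by injection hx
        exact congrArg (List.cons a) (col_inj hxy l' m' hx' hy')
    · by_cases hay : a = y
      · rw [col_cons_neg (fun hh => hax hh.1), col_cons_neg (fun hh => hax hh.1)] at hx
        have hx' : col x l' = col x m' := by injection hx
        have hhead : l'.head? = m'.head? := by
          rw [← col_head? x l', ← col_head? x m', hx']
        by_cases hl : l'.head? = some y
        · have hm : m'.head? = some y := hhead ▸ hl
          rw [col_cons_pos hay hl, col_cons_pos hay hm] at hy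
          exact congrArg (List.cons a) (col_inj hxy l' m' hx' hy)
        · have hm : ¬ m'.head? = some y := hhead ▸ hl
          rw [col_cons_neg (fun hh => hl hh.2), col_cons_neg (fun hh => hm hh.2)] at hy
          have hy' : col y l' = col y m' := by injection hy
          exact congrArg (List.cons a) (col_inj hxy l' m' hx' hy')
      · rw [col_cons_neg (fun hh => hax hh.1), col_cons_neg (fun hh => hax hh.1)] at hx
        rw [col_cons_neg (fun hh => hay hh.1), col_cons_neg (fun hh => hay hh.1)] at hy
        have hx' : col x l' = col x m' := by injection hx
        have hy' : col y l' = col y m' := by injection hy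
        exact congrArg (List.cons a) (col_inj hxy l' m' hx' hy')

/-- The underlying nonempty list of a free semigroup element. -/
def tl {α : Type*} (a : FreeSemigroup α) : List α := a.head :: a.tail

theorem tl_mul {α : Type*} (a b : FreeSemigroup α) : tl (a * b) = tl a ++ tl b := rfl

theorem tl_inj {α : Type*} {a b : FreeSemigroup α} (h : tl a = tl b) : a = b := by
  cases a; cases b
  simp only [tl, List.cons.injEq] at h
  exact FreeSemigroup.ext h.1 h.2

/-- The congruence "having equal `x`-collapsed word". -/
noncomputable def colCon {α : Type*} (x : α) : Con (FreeSemigroup α) where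
  r a b := col x (tl a) = col x (tl b)
  iseqv := ⟨fun _ => rfl, Eq.symm, Eq.trans⟩
  mul' := by
    intro w z u v h1 h2
    show col x (tl (w * u)) = col x (tl (z * v))
    rw [tl_mul, tl_mul, col_append_left, col_append_right, h1, h2,
      ← col_append_right, ← col_append_left]

theorem conGen_le_colCon {α : Type*} (x : α) :
    conGen (fun p q : FreeSemigroup α =>
        p = FreeSemigroup.of x ∧ q = FreeSemigroup.of x * FreeSemigroup.of x) ≤ colCon x := by
  apply Con.conGen_le.mpr
  rintro p q ⟨rfl, rfl⟩
  show col x (tl (FreeSemigroup.of x)) =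
    col x (tl (FreeSemigroup.of x * FreeSemigroup.of x))
  show col x [x] = col x [x, x]
  simp [col]

/-- A free semigroup on at least two generators is not finitely subdirectly
irreducible: for distinct free generators `x ≠ y`, the semigroup congruence
generated by `(x, x²)` and the one generated by `(y, y²)` intersect in the
diagonal. -/
theorem stmt8 {α : Type*} (x y : α) (hxy : x ≠ y) :
    ∀ a b : FreeSemigroup α,
      (conGen (fun p q : FreeSemigroup α =>
          p = FreeSemigroup.of x ∧ q = FreeSemigroup.of x * FreeSemigroup.of x) ⊓
       conGen (fun p q : FreeSemigroup α =>
          p = FreeSemigroup.of y ∧ q = FreeSemigroup.of y * FreeSemigroup.of y)) a b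
      → a = b := by
  intro a b hab
  rw [Con.inf_iff_and] at hab
  have hx : col x (tl a) = col x (tl b) := conGen_le_colCon x hab.1
  have hy : col y (tl a) = col y (tl b) := conGen_le_colCon y hab.2
  exact tl_inj (col_inj hxy _ _ hx hy)
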